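/- If a finitely generated R-module M lies in ΩDeep(R) ∩ DF(R), then M has a free direct summand. -/

import Mathlib

universe u

open IsLocalRing

noncomputable def rdepth (R : Type u) [CommRing R] [IsLocalRing R]
    (M : Type u) [AddCommGroup M] [Module R M] : ℕ :=
  sSup {n : ℕ | ∃ rs : List R, rs.length = n ∧ (∀ r ∈ rs, r ∈ maximalIdeal R) ∧
    RingTheory.Sequence.IsRegular M rs}

def Deep (R : Type u) [CommRing R] [IsLocalRing R]
    (M : Type u) [AddCommGroup M] [Module R M] : Prop :=
  Module.Finite R M ∧ rdepth R R ≤ rdepth R M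

def OmegaDeep (R : Type u) [CommRing R] [IsLocalRing R]
    (M : Type u) [AddCommGroup M] [Module R M] : Prop :=
  ∃ (n : ℕ) (f : M →ₗ[R] (Fin n → R)), Function.Injective f ∧
    Deep R ((Fin n → R) ⧸ LinearMap.range f)

def DF (R : Type u) [CommRing R] [IsLocalRing R]
    (M : Type u) [AddCommGroup M] [Module R M] : Prop :=
  ∃ (n : ℕ) (f : R →ₗ[R] (Fin n → M)), Function.Injective f ∧
    Deep R ((Fin n → M) ⧸ LinearMap.range f)

def HasFreeSummand (R : Type u) [CommRing R] (M : Type u) [AddCommGroup M] [Module R M] : Prop :=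
  ∃ (p : M →ₗ[R] R) (s : R →ₗ[R] M), p.comp s = LinearMap.id

noncomputable def mu (R : Type u) [CommRing R] (M : Type u) [AddCommGroup M] [Module R M] : ℕ :=
  sInf {n : ℕ | ∃ s : Fin n → M, Submodule.span R (Set.range s) = ⊤}

abbrev ExtVanishes (R : Type u) [CommRing R] (M N : Type u) [AddCommGroup M] [Module R M]
    [AddCommGroup N] [Module R N] (i : ℕ) : Prop :=
  Subsingleton (((Ext R (ModuleCat.{u} R) i).obj
    (Opposite.op (ModuleCat.of R M))).obj (ModuleCat.of R N))


set_option linter.unusedSectionVars false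
set_option maxHeartbeats 1000000

open RingTheory.Sequence
open scoped Pointwise

def RSeq (R : Type u) [CommRing R] [IsLocalRing R] (M : Type u) [AddCommGroup M]
    [Module R M] (t : ℕ) : Prop :=
  ∃ rs : List R, rs.length = t ∧ (∀ r ∈ rs, r ∈ maximalIdeal R) ∧
    RingTheory.Sequence.IsRegular M rs

lemma rdepth_eq (R : Type u) [CommRing R] [IsLocalRing R] (M : Type u) [AddCommGroup M]
    [Module R M] : rdepth R M = sSup {t : ℕ | RSeq R M t} := rfl


section Ass

variable {R : Type u} [CommRing R] {M : Type u} [AddCommGroup M] [Module R M]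

lemma assPrimes_subset_union [IsNoetherianRing R] (N : Submodule R M) :
    associatedPrimes R M ⊆ associatedPrimes R N ∪ associatedPrimes R (M ⧸ N) := by
  rintro p hp'
  obtain ⟨hp, x, hx⟩ := isAssociatedPrime_iff.mp hp'
  by_cases hcap : ∀ y ∈ (R ∙ x) ⊓ N, y = 0
  · right
    refine isAssociatedPrime_iff.mpr ⟨hp, N.mkQ x, ?_⟩
    rw [hx]; ext a
    simp only [Submodule.mem_colon_singleton, Submodule.mem_bot]
    rw [← map_smul, Submodule.mkQ_apply, Submodule.Quotient.mk_eq_zero]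
    constructor
    · intro h; rw [h]; exact N.zero_mem
    · intro h
      exact hcap _ ⟨Submodule.smul_mem _ a (Submodule.mem_span_singleton_self x), h⟩
  · left
    push_neg at hcap
    obtain ⟨y, ⟨hy1, hy2⟩, hy0⟩ := hcap
    obtain ⟨a, rfl⟩ := Submodule.mem_span_singleton.mp hy1
    have hanp : a ∉ p := by
      intro h
      rw [hx, Submodule.mem_colon_singleton, Submodule.mem_bot (R := R)] at h
      exact hy0 h
    refine isAssociatedPrime_iff.mpr ⟨hp, ⟨a • x, hy2⟩, ?_⟩
    ext b
    rw [Submodule.mem_colon_singleton, Submodule.mem_bot]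
    have h2 : (b • (⟨a • x, hy2⟩ : N) = 0) ↔ b • a • x = 0 := by
      rw [Subtype.ext_iff]; rfl
    rw [h2, smul_smul, ← Submodule.mem_bot (R := R), ← Submodule.mem_colon_singleton, ← hx]
    constructor
    · intro h; exact Ideal.mul_mem_right _ _ h
    · intro h; rcases hp.mem_or_mem h with h' | h'
      · exact h'
      · exact absurd h' hanp

lemma associatedPrimes_finite [IsNoetherianRing R] [Module.Finite R M] :
    (associatedPrimes R M).Finite := by
  have : IsNoetherian R M := isNoetherian_of_isNoetherianRing_of_finite R M
  have key : ∀ N : Submodule R M, (associatedPrimes R (M ⧸ N)).Finite := by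
    intro N
    induction N using IsNoetherian.induction with
    | _ N ih =>
      by_cases hs : Subsingleton (M ⧸ N)
      · rw [associatedPrimes.eq_empty_of_subsingleton]; exact Set.finite_empty
      have : Nontrivial (M ⧸ N) := not_subsingleton_iff_nontrivial.mp hs
      obtain ⟨p, hp⟩ := associatedPrimes.nonempty R (M ⧸ N)
      obtain ⟨hprime, xb, hxb⟩ := isAssociatedPrime_iff.mp hp
      obtain ⟨x, rfl⟩ := N.mkQ_surjective xb
      have hxN : x ∉ N := by
        intro h
        rw [show N.mkQ x = 0 from (Submodule.Quotient.mk_eq_zero N).mpr h] at hxb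
        exact hprime.ne_top (by rw [hxb, Ideal.eq_top_iff_one, Submodule.mem_colon_singleton, smul_zero]; exact Submodule.zero_mem _)
      set J : Submodule R M := N ⊔ R ∙ x with hJ
      have hNJ : N < J := by
        rw [hJ, lt_iff_le_and_ne]
        refine ⟨le_sup_left, fun h => hxN ?_⟩
        rw [h]; exact Submodule.mem_sup_right (Submodule.mem_span_singleton_self x)
      have hfinJ := ih J hNJ
      -- S := span of mkQ x inside M ⧸ N
      set S : Submodule R (M ⧸ N) := R ∙ (N.mkQ x) with hS
      have hSeq : S = Submodule.map N.mkQ J := by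
        rw [hJ, Submodule.map_sup, Submodule.map_span, Set.image_singleton]
        have hmap : Submodule.map N.mkQ N = ⊥ := by
          ext z
          simp only [Submodule.mem_map, Submodule.mem_bot]
          constructor
          · rintro ⟨w, hw, rfl⟩
            exact (Submodule.Quotient.mk_eq_zero N).mpr hw
          · rintro rfl
            exact ⟨0, N.zero_mem, map_zero _⟩
        rw [hmap, bot_sup_eq]
      -- Ass S = {p}
      have hfinS : (associatedPrimes R S).Finite := by
        have e1 : (R ⧸ p) ≃ₗ[R] S := by
          refine ?_ ≪≫ₗ (LinearMap.quotKerEquivRange (LinearMap.toSpanSingleton R _ (N.mkQ x)))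
            ≪≫ₗ LinearEquiv.ofEq _ _ (by rw [hS, LinearMap.span_singleton_eq_range])
          refine Submodule.quotEquivOfEq _ _ ?_
          ext a
          rw [LinearMap.mem_ker, LinearMap.toSpanSingleton_apply, hxb,
            Submodule.mem_colon_singleton, Submodule.mem_bot]
        rw [← LinearEquiv.AssociatedPrimes.eq e1,
          associatedPrimes.eq_singleton_of_isPrimary hprime.isPrimary, hprime.radical]
        exact Set.finite_singleton _
      have := assPrimes_subset_union S
      have e2 : ((M ⧸ N) ⧸ S) ≃ₗ[R] M ⧸ J := by
        rw [hSeq]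
        exact Submodule.quotientQuotientEquivQuotient N J hNJ.le
      rw [LinearEquiv.AssociatedPrimes.eq e2] at this
      exact Set.Finite.subset (hfinS.union hfinJ) this
  have e := (Submodule.quotEquivOfEqBot (⊥ : Submodule R M) rfl)
  rw [← LinearEquiv.AssociatedPrimes.eq e]
  exact key ⊥

end Ass


section ZD

variable {R : Type u} [CommRing R] [IsNoetherianRing R] [IsLocalRing R]
variable {M : Type u} [AddCommGroup M] [Module R M]

lemma exists_socle_of_no_regular [Module.Finite R M] [Nontrivial M]
    (h : ∀ r ∈ maximalIdeal R, ¬ IsSMulRegular M r) :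
    ∃ z : M, z ≠ 0 ∧ ∀ r ∈ maximalIdeal R, r • z = 0 := by
  have hfin : (associatedPrimes R M).Finite := associatedPrimes_finite
  have hsub : (maximalIdeal R : Set R) ⊆ ⋃ i ∈ (hfin.toFinset : Set (Ideal R)), ((i : Ideal R) : Set R) := by
    rw [hfin.coe_toFinset, biUnion_associatedPrimes_eq_compl_regular R M]
    intro r hr
    exact h r hr
  have := (Ideal.subset_union_prime (R := R) (s := hfin.toFinset) (f := fun i => i) ⊥ ⊥
    (fun i hi _ _ => (hfin.mem_toFinset.mp hi).isPrime)).mp hsub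
  obtain ⟨p, hps, hle⟩ := this
  have hass : IsAssociatedPrime p M := hfin.mem_toFinset.mp hps
  obtain ⟨hprime, x, hx⟩ := isAssociatedPrime_iff.mp hass
  have hxne : x ≠ 0 := by
    rintro rfl
    have hx' : p = ⊤ := by rw [hx, Ideal.eq_top_iff_one, Submodule.mem_colon_singleton, smul_zero]; exact Submodule.zero_mem _
    exact hprime.ne_top hx'
  refine ⟨x, hxne, fun r hr => ?_⟩
  have : r ∈ p := hle hr
  rw [hx, Submodule.mem_colon_singleton, Submodule.mem_bot (R := R)] at this
  exact this

lemma exists_regular_of_no_socle [Module.Finite R M] [Nontrivial M]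
    (h : ∀ z : M, z ≠ 0 → ∃ r ∈ maximalIdeal R, r • z ≠ 0) :
    ∃ r ∈ maximalIdeal R, IsSMulRegular M r := by
  by_contra hc
  push_neg at hc
  obtain ⟨z, hz, hzz⟩ := exists_socle_of_no_regular hc
  obtain ⟨r, hr, hrz⟩ := h z hz
  exact hrz (hzz r hr)

lemma isSMulRegular_prod {A B : Type u} [AddCommGroup A] [Module R A]
    [AddCommGroup B] [Module R B] {r : R} (hA : IsSMulRegular A r) (hB : IsSMulRegular B r) :
    IsSMulRegular (A × B) r := by
  intro x y hxy
  have h1 : r • x.1 = r • y.1 := congrArg Prod.fst hxy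
  have h2 : r • x.2 = r • y.2 := congrArg Prod.snd hxy
  exact Prod.ext (hA h1) (hB h2)

lemma exists_common_regular {A B : Type u} [AddCommGroup A] [Module R A]
    [AddCommGroup B] [Module R B] [Module.Finite R A] [Module.Finite R B]
    (hA : ∃ r ∈ maximalIdeal R, IsSMulRegular A r)
    (hB : ∃ r ∈ maximalIdeal R, IsSMulRegular B r) :
    ∃ r ∈ maximalIdeal R, IsSMulRegular A r ∧ IsSMulRegular B r := by
  obtain ⟨a, ha, haA⟩ := hA
  obtain ⟨b, hb, hbB⟩ := hB
  by_cases hAt : Subsingleton A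
  · exact ⟨b, hb, Function.injective_of_subsingleton _, hbB⟩
  have : Nontrivial A := not_subsingleton_iff_nontrivial.mp hAt
  have : ∃ r ∈ maximalIdeal R, IsSMulRegular (A × B) r := by
    apply exists_regular_of_no_socle
    intro z hz
    by_cases h1 : z.1 = 0
    · have h2 : z.2 ≠ 0 := fun h => hz (Prod.ext h1 h)
      exact ⟨b, hb, fun hbz => h2 (hbB (show b • z.2 = b • 0 by rw [smul_zero]; exact congrArg Prod.snd hbz))⟩
    · exact ⟨a, ha, fun haz => h1 (haA (show a • z.1 = a • 0 by rw [smul_zero]; exact congrArg Prod.fst haz))⟩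
  obtain ⟨r, hr, hreg⟩ := this
  exact ⟨r, hr, hreg.of_injective (LinearMap.inl R A B) LinearMap.inl_injective,
    hreg.of_injective (LinearMap.inr R A B) LinearMap.inr_injective⟩

lemma quotSMulTop_nontrivial [Module.Finite R M] [Nontrivial M] {r : R}
    (hr : r ∈ maximalIdeal R) : Nontrivial (QuotSMulTop r M) := by
  apply Submodule.Quotient.nontrivial_iff.mpr
  intro htop
  have h1 : (⊤ : Submodule R M) ≠ (maximalIdeal R) • ⊤ :=
    Submodule.top_ne_ideal_smul_of_le_jacobson_annihilator
      (IsLocalRing.maximalIdeal_le_jacobson _)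
  apply h1
  refine le_antisymm ?_ le_top
  calc (⊤ : Submodule R M) = r • ⊤ := htop.symm
    _ = Ideal.span {r} • ⊤ := (Submodule.ideal_span_singleton_smul r ⊤).symm
    _ ≤ (maximalIdeal R) • ⊤ := Submodule.smul_mono_left ((Ideal.span_le).mpr (Set.singleton_subset_iff.mpr hr))

end ZD


section Swap

variable {R : Type u} [CommRing R] [IsNoetherianRing R] [IsLocalRing R]
variable {N : Type u} [AddCommGroup N] [Module R N]

lemma mem_smul_top_iff (r : R) (z : N) :
    z ∈ (r • ⊤ : Submodule R N) ↔ ∃ w, r • w = z := by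
  constructor
  · rintro ⟨x, -, rfl⟩; exact ⟨x, rfl⟩
  · rintro ⟨w, rfl⟩; exact Submodule.smul_mem_pointwise_smul w r ⊤ trivial

lemma rseq_congr {A B : Type u} [AddCommGroup A] [Module R A] [AddCommGroup B] [Module R B]
    (e : A ≃ₗ[R] B) {t : ℕ} (h : RSeq R A t) : RSeq R B t := by
  obtain ⟨rs, h1, h2, h3⟩ := h
  exact ⟨rs, h1, h2, (e.isRegular_congr rs).mp h3⟩

/-- The socle-swap lemma: a nonzero element killed by `𝔪` in `N⧸xN` yields one in `N⧸yN`. -/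
lemma socle_swap {x y : R} (hy : y ∈ maximalIdeal R)
    (hxr : IsSMulRegular N x) (hyr : IsSMulRegular N y)
    (h : ∃ zb : QuotSMulTop x N, zb ≠ 0 ∧ ∀ r ∈ maximalIdeal R, r • zb = 0) :
    ∃ wb : QuotSMulTop y N, wb ≠ 0 ∧ ∀ r ∈ maximalIdeal R, r • wb = 0 := by
  obtain ⟨zb, hzb, hsoc⟩ := h
  obtain ⟨z, rfl⟩ := Submodule.Quotient.mk_surjective _ zb
  have hz : z ∉ (x • ⊤ : Submodule R N) := fun h => hzb ((Submodule.Quotient.mk_eq_zero _).mpr h)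
  have hmz : ∀ r ∈ maximalIdeal R, r • z ∈ (x • ⊤ : Submodule R N) := by
    intro r hr
    have := hsoc r hr
    rw [← Submodule.Quotient.mk_smul, Submodule.Quotient.mk_eq_zero] at this
    exact this
  obtain ⟨w, hw⟩ := (mem_smul_top_iff x _).mp (hmz y hy)
  refine ⟨Submodule.Quotient.mk w, ?_, ?_⟩
  · intro h0
    rw [Submodule.Quotient.mk_eq_zero, mem_smul_top_iff] at h0
    obtain ⟨u, hu⟩ := h0
    apply hz
    rw [mem_smul_top_iff]
    exact ⟨u, hyr (show y • (x • u) = y • z by rw [smul_comm y x u, hu, hw])⟩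
  · intro r hr
    rw [← Submodule.Quotient.mk_smul, Submodule.Quotient.mk_eq_zero, mem_smul_top_iff]
    obtain ⟨v, hv⟩ := (mem_smul_top_iff x _).mp (hmz r hr)
    exact ⟨v, hxr (show x • (y • v) = x • (r • w) by
      rw [smul_comm x y v, hv, smul_comm y r z, ← hw, smul_comm r x w])⟩

/-- Commuting two successive quotients. -/
noncomputable def quotSMulTopComm (x d : R) :
    QuotSMulTop d (QuotSMulTop x N) ≃ₗ[R] QuotSMulTop x (QuotSMulTop d N) := by
  have hof : ∀ a b : R, (Ideal.ofList [a, b] : Ideal R) = Ideal.ofList [b, a] := by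
    intro a b
    apply congrArg Ideal.span
    ext r
    simp only [Set.mem_setOf_eq, List.mem_cons, List.not_mem_nil, or_false]
    exact or_comm
  refine (?_ ≪≫ₗ (Submodule.quotOfListConsSMulTopEquivQuotSMulTopInner N x [d]).symm) ≪≫ₗ
    (Submodule.quotEquivOfEq _ _ (by rw [hof]) ≪≫ₗ
      Submodule.quotOfListConsSMulTopEquivQuotSMulTopInner N d [x]) ≪≫ₗ ?_
  · refine Submodule.quotEquivOfEq _ _ ?_
    rw [Ideal.ofList_singleton, Submodule.ideal_span_singleton_smul]
  · refine Submodule.quotEquivOfEq _ _ ?_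
    rw [Ideal.ofList_singleton, Submodule.ideal_span_singleton_smul]

end Swap

section Exchange

variable {R : Type u} [CommRing R] [IsNoetherianRing R] [IsLocalRing R]

lemma exchange : ∀ (s : ℕ) (N : Type u) [AddCommGroup N] [Module R N] [Module.Finite R N],
    ∀ {x y : R}, x ∈ maximalIdeal R → y ∈ maximalIdeal R →
    IsSMulRegular N x → IsSMulRegular N y →
    RSeq R (QuotSMulTop x N) s → RSeq R (QuotSMulTop y N) s := by
  intro s
  induction s with
  | zero =>
    intro N _ _ _ x y hx hy hxr hyr h
    obtain ⟨rs, hlen, hmem, hreg⟩ := h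
    haveI : Nontrivial (QuotSMulTop x N) := hreg.nontrivial
    haveI hNnt : Nontrivial N := (Submodule.mkQ_surjective (x • ⊤ : Submodule R N)).nontrivial
    haveI := quotSMulTop_nontrivial (M := N) hy
    exact ⟨[], rfl, by simp, IsRegular.nil R _⟩
  | succ s ih =>
    intro N _ _ _ x y hx hy hxr hyr h
    haveI : IsNoetherian R N := isNoetherian_of_isNoetherianRing_of_finite R N
    obtain ⟨rs, hlen, hmem, hreg⟩ := h
    cases rs with
    | nil => simp at hlen
    | cons c cs =>
      have hc : c ∈ maximalIdeal R := hmem c List.mem_cons_self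
      rw [isRegular_cons_iff] at hreg
      obtain ⟨hcreg, hcsreg⟩ := hreg
      haveI : Nontrivial (QuotSMulTop c (QuotSMulTop x N)) := hcsreg.nontrivial
      haveI : Nontrivial (QuotSMulTop x N) :=
        (Submodule.mkQ_surjective (c • ⊤ : Submodule R (QuotSMulTop x N))).nontrivial
      haveI hNnt : Nontrivial N := (Submodule.mkQ_surjective (x • ⊤ : Submodule R N)).nontrivial
      haveI : Nontrivial (QuotSMulTop y N) := quotSMulTop_nontrivial (M := N) hy
      haveI : Module.Finite R (QuotSMulTop x N) := Module.Finite.quotient R _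
      haveI : Module.Finite R (QuotSMulTop y N) := Module.Finite.quotient R _
      -- a regular element on N ⧸ yN
      have hyQ : ∃ r ∈ maximalIdeal R, IsSMulRegular (QuotSMulTop y N) r := by
        by_contra hcon
        push_neg at hcon
        have hcon' : ∀ r ∈ maximalIdeal R, ¬ IsSMulRegular (QuotSMulTop y N) r := hcon
        obtain ⟨zb, hzb0, hzbs⟩ := exists_socle_of_no_regular hcon'
        obtain ⟨wb, hwb0, hwbs⟩ := socle_swap (x := y) (y := x) hx hyr hxr ⟨zb, hzb0, hzbs⟩
        exact hwb0 (hcreg (show c • wb = c • 0 by rw [smul_zero]; exact hwbs c hc))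
      obtain ⟨d, hd, hdx, hdy⟩ := exists_common_regular ⟨c, hc, hcreg⟩ hyQ
      -- N⧸xN modulo d has a regular sequence of length s
      have h1 : RSeq R (QuotSMulTop d (QuotSMulTop x N)) s :=
        ih (QuotSMulTop x N) hc hd hcreg hdx
          ⟨cs, by simpa using hlen, fun r hr => hmem r (List.mem_cons_of_mem c hr), hcsreg⟩
      have h2 : RSeq R (QuotSMulTop x (QuotSMulTop d N)) s :=
        rseq_congr (quotSMulTopComm x d) h1
      -- x and y are regular on N ⧸ dN
      have hmemxd : ∀ r ∈ [x, d], r ∈ maximalIdeal R := by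
        intro r hr
        rcases List.mem_cons.mp hr with rfl | hr
        · exact hx
        · rw [List.mem_singleton] at hr; subst hr; exact hd
      have hmemyd : ∀ r ∈ [y, d], r ∈ maximalIdeal R := by
        intro r hr
        rcases List.mem_cons.mp hr with rfl | hr
        · exact hy
        · rw [List.mem_singleton] at hr; subst hr; exact hd
      have hwxd : IsWeaklyRegular N [x, d] :=
        (isWeaklyRegular_cons_iff N x [d]).mpr ⟨hxr, (isWeaklyRegular_singleton_iff _ d).mpr hdx⟩
      have hwyd : IsWeaklyRegular N [y, d] :=
        (isWeaklyRegular_cons_iff N y [d]).mpr ⟨hyr, (isWeaklyRegular_singleton_iff _ d).mpr hdy⟩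
      have hwdx : IsWeaklyRegular N [d, x] :=
        IsLocalRing.isWeaklyRegular_of_perm_of_subset_maximalIdeal hwxd
          (List.Perm.swap d x []) hmemxd
      have hwdy : IsWeaklyRegular N [d, y] :=
        IsLocalRing.isWeaklyRegular_of_perm_of_subset_maximalIdeal hwyd
          (List.Perm.swap d y []) hmemyd
      have hdreg : IsSMulRegular N d := ((isWeaklyRegular_cons_iff N d [x]).mp hwdx).1
      have hxQd : IsSMulRegular (QuotSMulTop d N) x :=
        (isWeaklyRegular_singleton_iff _ x).mp ((isWeaklyRegular_cons_iff N d [x]).mp hwdx).2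
      have hyQd : IsSMulRegular (QuotSMulTop d N) y :=
        (isWeaklyRegular_singleton_iff _ y).mp ((isWeaklyRegular_cons_iff N d [y]).mp hwdy).2
      haveI : Module.Finite R (QuotSMulTop d N) := Module.Finite.quotient R _
      have h3 : RSeq R (QuotSMulTop y (QuotSMulTop d N)) s := by
        exact ih (QuotSMulTop d N) (x := x) (y := y) hx hy hxQd hyQd h2
      have h4 : RSeq R (QuotSMulTop d (QuotSMulTop y N)) s :=
        rseq_congr (quotSMulTopComm y d).symm h3
      obtain ⟨ss, hsslen, hssmem, hssreg⟩ := h4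
      refine ⟨d :: ss, by simp [hsslen], ?_, IsRegular.cons hdy hssreg⟩
      intro r hr
      rcases List.mem_cons.mp hr with rfl | hr
      · exact hd
      · exact hssmem r hr

/-- Quotienting by any regular element drops a regular sequence's length by exactly one. -/
lemma descend (s : ℕ) (N : Type u) [AddCommGroup N] [Module R N] [Module.Finite R N]
    {r : R} (hr : r ∈ maximalIdeal R) (hreg : IsSMulRegular N r)
    (h : RSeq R N (s + 1)) : RSeq R (QuotSMulTop r N) s := by
  obtain ⟨rs, hlen, hmem, hrsreg⟩ := h
  cases rs with
  | nil => simp at hlen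
  | cons a as =>
    rw [isRegular_cons_iff] at hrsreg
    exact exchange s N (hmem a List.mem_cons_self) hr hrsreg.1 hreg
      ⟨as, by simpa using hlen, fun t ht => hmem t (List.mem_cons_of_mem a ht), hrsreg.2⟩

end Exchange

section S5

variable {R : Type u} [CommRing R] [IsNoetherianRing R] [IsLocalRing R]



/-- SES middle: if `rs` is regular on the two ends it is regular on the middle. -/
lemma isRegular_middle :
    ∀ (rs : List R) (A B C : Type u) [AddCommGroup A] [Module R A] [AddCommGroup B] [Module R B]
      [AddCommGroup C] [Module R C] (ι : A →ₗ[R] B) (π : B →ₗ[R] C),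
      Function.Injective ι → Function.Surjective π → LinearMap.range ι = LinearMap.ker π →
      IsRegular A rs → IsRegular C rs → IsRegular B rs := by
  intro rs
  induction rs with
  | nil =>
    intro A B C _ _ _ _ _ _ ι π hι hπ hrk hA hC
    haveI := hA.nontrivial
    haveI : Nontrivial B := hι.nontrivial
    exact IsRegular.nil R B
  | cons r rs ih =>
    intro A B C _ _ _ _ _ _ ι π hι hπ hrk hA hC
    rw [isRegular_cons_iff] at hA hC ⊢
    obtain ⟨hrA, hA'⟩ := hA
    obtain ⟨hrC, hC'⟩ := hC
    have hrB : IsSMulRegular B r := isSMulRegular_of_range_eq_ker hι hrk hrA hrC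
    have hexact : Function.Exact ι π := LinearMap.exact_iff.mpr hrk.symm
    have hexact0 : Function.Exact (0 : A →ₗ[R] A) ι := by
      rw [LinearMap.exact_iff, LinearMap.range_zero]
      exact LinearMap.ker_eq_bot.mpr hι
    have hexactπ0 : Function.Exact π (0 : C →ₗ[R] C) := by
      rw [LinearMap.exact_iff, LinearMap.ker_zero]
      exact (LinearMap.range_eq_top.mpr hπ).symm
    have e1 : Function.Exact (QuotSMulTop.map r (0 : A →ₗ[R] A)) (QuotSMulTop.map r ι) :=
      QuotSMulTop.map_first_exact_on_four_term_exact_of_isSMulRegular_last hexact0 hexact hrC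
    have e2 : Function.Exact (QuotSMulTop.map r ι) (QuotSMulTop.map r π) :=
      QuotSMulTop.map_first_exact_on_four_term_exact_of_isSMulRegular_last hexact hexactπ0 hrC
    have hι' : Function.Injective (QuotSMulTop.map r ι) := by
      rw [← LinearMap.ker_eq_bot, LinearMap.exact_iff.mp e1, map_zero, LinearMap.range_zero]
    have hπ' : Function.Surjective (QuotSMulTop.map r π) := QuotSMulTop.map_surjective r hπ
    have hrk' : LinearMap.range (QuotSMulTop.map r ι) = LinearMap.ker (QuotSMulTop.map r π) :=
      (LinearMap.exact_iff.mp e2).symm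
    exact ⟨hrB, ih _ _ _ _ _ hι' hπ' hrk' hA' hC'⟩

/-- Common regular sequence for two modules. -/
lemma exists_common_rseq :
    ∀ (t : ℕ) (A B : Type u) [AddCommGroup A] [Module R A] [AddCommGroup B] [Module R B]
      [Module.Finite R A] [Module.Finite R B],
      RSeq R A t → RSeq R B t →
      ∃ rs : List R, rs.length = t ∧ (∀ r ∈ rs, r ∈ maximalIdeal R) ∧
        IsRegular A rs ∧ IsRegular B rs := by
  intro t
  induction t with
  | zero =>
    intro A B _ _ _ _ _ _ hA hB
    obtain ⟨as, halen, -, hareg⟩ := hA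
    obtain ⟨bs, hblen, -, hbreg⟩ := hB
    rw [List.length_eq_zero_iff] at halen hblen
    subst halen; subst hblen
    exact ⟨[], rfl, by simp, hareg, hbreg⟩
  | succ t ih =>
    intro A B _ _ _ _ _ _ hA hB
    obtain ⟨as, halen, hamem, hareg⟩ := hA
    obtain ⟨bs, hblen, hbmem, hbreg⟩ := hB
    cases as with
    | nil => simp at halen
    | cons a as' =>
      cases bs with
      | nil => simp at hblen
      | cons b bs' =>
        rw [isRegular_cons_iff] at hareg hbreg
        obtain ⟨r, hr, hrA, hrB⟩ := exists_common_regular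
          ⟨a, hamem a List.mem_cons_self, hareg.1⟩
          ⟨b, hbmem b List.mem_cons_self, hbreg.1⟩
        have hA' : RSeq R (QuotSMulTop r A) t :=
          descend t A hr hrA ⟨a :: as', halen, hamem, (isRegular_cons_iff A a as').mpr hareg⟩
        have hB' : RSeq R (QuotSMulTop r B) t :=
          descend t B hr hrB ⟨b :: bs', hblen, hbmem, (isRegular_cons_iff B b bs').mpr hbreg⟩
        haveI : Module.Finite R (QuotSMulTop r A) := Module.Finite.quotient R _
        haveI : Module.Finite R (QuotSMulTop r B) := Module.Finite.quotient R _
        obtain ⟨ss, hsslen, hssmem, hssA, hssB⟩ := ih (QuotSMulTop r A) (QuotSMulTop r B) hA' hB'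
        refine ⟨r :: ss, by simp [hsslen], ?_, IsRegular.cons hrA hssA, IsRegular.cons hrB hssB⟩
        intro x hx
        rcases List.mem_cons.mp hx with rfl | hx
        · exact hr
        · exact hssmem x hx

/-- Prefixes of regular sequences are regular. -/
lemma isRegular_take {M : Type u} [AddCommGroup M] [Module R M] {rs : List R} (t : ℕ)
    (h : IsRegular M rs) : IsRegular M (rs.take t) := by
  have hle : Ideal.ofList (rs.take t) ≤ Ideal.ofList rs :=
    Ideal.span_mono (fun r hr => List.take_subset t rs hr)
  refine ⟨?_, fun heq => h.top_ne_smul (le_antisymm ?_ le_top)⟩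
  · have := h.toIsWeaklyRegular
    rw [← List.take_append_drop t rs, isWeaklyRegular_append_iff] at this
    exact this.1
  · calc (⊤ : Submodule R M) = Ideal.ofList (rs.take t) • ⊤ := heq
      _ ≤ Ideal.ofList rs • ⊤ := Submodule.smul_mono_left hle

lemma rseq_take {N : Type u} [AddCommGroup N] [Module R N] {n t : ℕ} (h : RSeq R N n)
    (ht : t ≤ n) : RSeq R N t := by
  obtain ⟨rs, hlen, hmem, hreg⟩ := h
  exact ⟨rs.take t, by rw [List.length_take, hlen]; exact min_eq_left ht,
    fun r hr => hmem r (List.take_subset t rs hr), isRegular_take t hreg⟩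

/-- Extraction: positive bound below the sSup of regular sequence lengths. -/
lemma rseq_of_le_sSup {N : Type u} [AddCommGroup N] [Module R N] {t : ℕ} (ht : 0 < t)
    (h : t ≤ sSup {n | RSeq R N n}) : RSeq R N t := by
  have hne : {n | RSeq R N n}.Nonempty := by
    by_contra hc
    rw [Set.not_nonempty_iff_eq_empty] at hc
    rw [hc, csSup_empty] at h
    exact absurd h (by simpa using ht.ne')
  by_cases hb : BddAbove {n | RSeq R N n}
  · exact rseq_take (Nat.sSup_mem hne hb) h
  · obtain ⟨n, hn, hnt⟩ := not_bddAbove_iff.mp hb t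
    exact rseq_take hn hnt.le

/-- Boundedness of regular sequence lengths. -/
lemma rseq_bddAbove (N : Type u) [AddCommGroup N] [Module R N] [Module.Finite R N] :
    BddAbove {t | RSeq R N t} := by
  have key : ∀ I : Ideal R, ∀ (N : Type u) [AddCommGroup N] [Module R N] [Module.Finite R N],
      I ≤ Module.annihilator R N → BddAbove {t | RSeq R N t} := by
    intro I
    induction I using IsNoetherian.induction with
    | _ I ih =>
      intro N _ _ _ hIle
      by_cases hreg : ∃ r ∈ maximalIdeal R, IsSMulRegular N r
      · obtain ⟨r0, hr0m, hr0reg⟩ := hreg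
        by_cases hNt : Nontrivial N
        · have hr0ann : r0 ∉ Module.annihilator R N := by
            intro hc
            obtain ⟨z, hz⟩ := exists_ne (0 : N)
            rw [Module.mem_annihilator] at hc
            exact hz (hr0reg (show r0 • z = r0 • 0 by rw [hc z, smul_zero]))
          set J := Module.annihilator R N ⊔ Ideal.span {r0} with hJdef
          have hIJ : I < J := by
            refine lt_of_le_of_ne (le_trans hIle le_sup_left) (fun h => ?_)
            have : r0 ∈ I := h ▸ Submodule.mem_sup_right (Ideal.subset_span rfl)
            exact hr0ann (hIle this)
          have hJann : J ≤ Module.annihilator R (QuotSMulTop r0 N) := by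
            apply sup_le
            · intro a ha
              rw [Module.mem_annihilator]
              intro m
              obtain ⟨x, rfl⟩ := Submodule.Quotient.mk_surjective _ m
              rw [← Submodule.Quotient.mk_smul, Module.mem_annihilator.mp ha x,
                Submodule.Quotient.mk_zero]
            · rw [Ideal.span_le]
              intro x hx
              rw [Set.mem_singleton_iff] at hx
              rw [hx, SetLike.mem_coe, Module.mem_annihilator]
              intro m
              obtain ⟨y, rfl⟩ := Submodule.Quotient.mk_surjective _ m
              rw [← Submodule.Quotient.mk_smul, Submodule.Quotient.mk_eq_zero]
              exact Submodule.smul_mem_pointwise_smul y r0 ⊤ trivial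
          haveI : Module.Finite R (QuotSMulTop r0 N) := Module.Finite.quotient R _
          obtain ⟨b, hb⟩ := ih J hIJ (QuotSMulTop r0 N) hJann
          refine ⟨b + 1, fun t htmem => ?_⟩
          cases t with
          | zero => exact Nat.zero_le _
          | succ s => exact Nat.succ_le_succ (hb (descend s N hr0m hr0reg htmem))
        · refine ⟨0, fun t htmem => ?_⟩
          obtain ⟨rs, hlen, hmem, hreg'⟩ := htmem
          exact absurd hreg'.nontrivial hNt
      · refine ⟨0, fun t htmem => ?_⟩
        obtain ⟨rs, hlen, hmem, hreg'⟩ := htmem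
        cases rs with
        | nil => simp [← hlen]
        | cons a as =>
          exact absurd ⟨a, hmem a List.mem_cons_self,
            ((isRegular_cons_iff N a as).mp hreg').1⟩ hreg
  exact key ⊥ N bot_le

end S5

section S6

variable {R : Type u} [CommRing R] [IsNoetherianRing R] [IsLocalRing R]

lemma smul_top_mem_of_map {A B : Type u} [AddCommGroup A] [Module R A] [AddCommGroup B]
    [Module R B] (f : A →ₗ[R] B) {x : A}
    (hx : x ∈ (maximalIdeal R • ⊤ : Submodule R A)) :
    f x ∈ (maximalIdeal R • ⊤ : Submodule R B) := by
  have h1 := Submodule.mem_map_of_mem (f := f) hx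
  rw [Submodule.map_smul''] at h1
  exact Submodule.smul_mono le_rfl le_top h1

lemma pi_mem_smul_top {k : ℕ} {A : Type u} [AddCommGroup A] [Module R A] (x : Fin k → A)
    (h : ∀ i, x i ∈ (maximalIdeal R • ⊤ : Submodule R A)) :
    x ∈ (maximalIdeal R • ⊤ : Submodule R (Fin k → A)) := by
  have hx : x = ∑ i, Pi.single i (x i) := by rw [Finset.univ_sum_single]
  rw [hx]
  refine Submodule.sum_mem _ (fun i _ => ?_)
  have h2 := smul_top_mem_of_map (LinearMap.single R (fun _ : Fin k => A) i) (h i)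
  simpa using h2

lemma mem_smul_top_self {c : R} (hc : c ∈ maximalIdeal R) :
    c ∈ (maximalIdeal R • ⊤ : Submodule R R) := by
  have h2 := Submodule.smul_mem_smul hc (Submodule.mem_top (x := (1:R)))
  simpa using h2

lemma isRegular_pi {Y : Type u} [AddCommGroup Y] [Module R Y] {rs : List R}
    (hY : IsRegular Y rs) : ∀ n : ℕ, IsRegular (Fin (n+1) → Y) rs := by
  intro n
  induction n with
  | zero =>
    exact ((LinearEquiv.funUnique (Fin 1) R Y).isRegular_congr rs).mpr hY
  | succ n ihn =>
    refine isRegular_middle rs Y (Fin (n+2) → Y) (Fin (n+1) → Y)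
      (LinearMap.single R (fun _ => Y) 0) (LinearMap.funLeft R Y Fin.succ)
      (by intro a b hab; simpa using congrFun hab 0)
      (LinearMap.funLeft_surjective_of_injective _ _ _ (Fin.succ_injective _)) ?_ hY ihn
    ext w
    simp only [LinearMap.mem_range, LinearMap.mem_ker]
    constructor
    · rintro ⟨y, rfl⟩
      ext i
      simp [LinearMap.funLeft_apply, Pi.single_eq_of_ne (Fin.succ_ne_zero i)]
    · intro hw
      refine ⟨w 0, ?_⟩
      ext j
      rcases Fin.eq_zero_or_eq_succ j with rfl | ⟨i, rfl⟩
      · simp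
      · have h3 : w i.succ = 0 := congrFun hw i
        simp [Pi.single_eq_of_ne (Fin.succ_ne_zero i), h3]

lemma exists_regular_on_domain {W V : Type u} [AddCommGroup W] [Module R W] [AddCommGroup V]
    [Module R V] [Module.Finite R W] [Nontrivial W] (v : W →ₗ[R] V)
    (hinj : Function.Injective v)
    (hvm : v ∈ (maximalIdeal R • ⊤ : Submodule R (W →ₗ[R] V))) :
    ∃ r ∈ maximalIdeal R, IsSMulRegular W r := by
  by_contra hc
  push_neg at hc
  obtain ⟨z, hz0, hzs⟩ := exists_socle_of_no_regular hc
  have hvz : v z = 0 := by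
    refine Submodule.smul_induction_on hvm ?_ ?_
    · intro r hr f _
      show (r • f) z = 0
      rw [LinearMap.smul_apply, ← LinearMap.map_smul, hzs r hr, map_zero]
    · intro f g hf hg
      show (f + g) z = 0
      rw [LinearMap.add_apply, hf, hg, add_zero]
  exact hz0 (hinj (by rw [hvz, map_zero]))

lemma key_induction :
    ∀ (t : ℕ) (W V : Type u) [AddCommGroup W] [Module R W] [AddCommGroup V] [Module R V]
      [Module.Finite R W] [Module.Finite R V] [Nontrivial W] (v : W →ₗ[R] V),
      Function.Injective v → v ∈ (maximalIdeal R • ⊤ : Submodule R (W →ₗ[R] V)) →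
      RSeq R (V ⧸ LinearMap.range v) t → RSeq R W (t + 1) := by
  intro t
  induction t with
  | zero =>
    intro W V _ _ _ _ _ _ _ v hinj hvm h0
    obtain ⟨r, hr, hrW⟩ := exists_regular_on_domain v hinj hvm
    refine ⟨[r], rfl, by simpa using hr, ?_⟩
    haveI := quotSMulTop_nontrivial (M := W) hr
    exact IsRegular.cons hrW (IsRegular.nil R _)
  | succ t ih =>
    intro W V _ _ _ _ _ _ _ v hinj hvm h
    obtain ⟨cs, hcslen, hcsmem, hcsreg⟩ := h
    cases cs with
    | nil => simp at hcslen
    | cons c cs' =>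
      rw [isRegular_cons_iff] at hcsreg
      obtain ⟨r, hr, hrW, hrZ⟩ := exists_common_regular
        (exists_regular_on_domain v hinj hvm)
        ⟨c, hcsmem c List.mem_cons_self, hcsreg.1⟩
      have hrk : LinearMap.range v = LinearMap.ker (LinearMap.range v).mkQ := by
        rw [Submodule.ker_mkQ]
      have hrV : IsSMulRegular V r := isSMulRegular_of_range_eq_ker hinj hrk hrW hrZ
      have hex1 : Function.Exact v (LinearMap.range v).mkQ := LinearMap.exact_iff.mpr hrk.symm
      have hex0 : Function.Exact (0 : W →ₗ[R] W) v := by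
        rw [LinearMap.exact_iff, LinearMap.range_zero]
        exact LinearMap.ker_eq_bot.mpr hinj
      have hexq : Function.Exact (LinearMap.range v).mkQ
          (0 : (V ⧸ LinearMap.range v) →ₗ[R] (V ⧸ LinearMap.range v)) := by
        rw [LinearMap.exact_iff, LinearMap.ker_zero]
        exact (LinearMap.range_eq_top.mpr (Submodule.mkQ_surjective _)).symm
      have e1 := QuotSMulTop.map_first_exact_on_four_term_exact_of_isSMulRegular_last
        hex0 hex1 hrZ
      have e2 := QuotSMulTop.map_first_exact_on_four_term_exact_of_isSMulRegular_last
        hex1 hexq hrZ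
      have hinj' : Function.Injective (QuotSMulTop.map r v) := by
        rw [← LinearMap.ker_eq_bot, LinearMap.exact_iff.mp e1, map_zero, LinearMap.range_zero]
      have hsurj' : Function.Surjective (QuotSMulTop.map r (LinearMap.range v).mkQ) :=
        QuotSMulTop.map_surjective r (Submodule.mkQ_surjective _)
      have hker' : LinearMap.ker (QuotSMulTop.map r (LinearMap.range v).mkQ) =
          LinearMap.range (QuotSMulTop.map r v) := LinearMap.exact_iff.mp e2
      let e3 : (QuotSMulTop r V ⧸ LinearMap.range (QuotSMulTop.map r v)) ≃ₗ[R]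
          QuotSMulTop r (V ⧸ LinearMap.range v) :=
        (Submodule.quotEquivOfEq _ _ hker'.symm) ≪≫ₗ
          ((QuotSMulTop.map r (LinearMap.range v).mkQ).quotKerEquivOfSurjective hsurj')
      have hvm' : QuotSMulTop.map r v ∈
          (maximalIdeal R • ⊤ : Submodule R (QuotSMulTop r W →ₗ[R] QuotSMulTop r V)) :=
        smul_top_mem_of_map (QuotSMulTop.map r) hvm
      have hZq : RSeq R (QuotSMulTop r (V ⧸ LinearMap.range v)) t :=
        descend t _ hr hrZ
          ⟨c :: cs', hcslen, hcsmem, (isRegular_cons_iff _ c cs').mpr hcsreg⟩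
      have hZq' : RSeq R (QuotSMulTop r V ⧸ LinearMap.range (QuotSMulTop.map r v)) t :=
        rseq_congr e3.symm hZq
      haveI : Module.Finite R (QuotSMulTop r W) := Module.Finite.quotient R _
      haveI : Module.Finite R (QuotSMulTop r V) := Module.Finite.quotient R _
      haveI : Nontrivial (QuotSMulTop r W) := quotSMulTop_nontrivial (M := W) hr
      obtain ⟨ss, hsslen, hssmem, hssreg⟩ :=
        ih (QuotSMulTop r W) (QuotSMulTop r V) (QuotSMulTop.map r v) hinj' hvm' hZq'
      refine ⟨r :: ss, by simp [hsslen], ?_, IsRegular.cons hrW hssreg⟩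
      intro x hx
      rcases List.mem_cons.mp hx with rfl | hx
      · exact hr
      · exact hssmem x hx

end S6

/-- If a finitely generated module `M` over a Noetherian local ring lies in
`ΩDeep(R) ∩ DF(R)`, then `M` has a free direct summand. -/
theorem stmt_4 (R : Type u) [CommRing R] [IsNoetherianRing R] [IsLocalRing R]
    (M : Type u) [AddCommGroup M] [Module R M] [Module.Finite R M]
    (h1 : OmegaDeep R M) (h2 : DF R M) :
    HasFreeSummand R M := by
  obtain ⟨m, g, hg, hYdeep⟩ := h1
  obtain ⟨n, f, hf, hXdeep⟩ := h2
  -- n, m positive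
  obtain ⟨n', rfl⟩ : ∃ n', n = n' + 1 := by
    cases n with
    | zero => exact absurd (hf (Subsingleton.elim (f 0) (f 1))) zero_ne_one
    | succ k => exact ⟨k, rfl⟩
  obtain ⟨m', rfl⟩ : ∃ m', m = m' + 1 := by
    cases m with
    | zero =>
      exfalso
      haveI : Subsingleton M := ⟨fun a b => hg (Subsingleton.elim _ _)⟩
      exact absurd (hf (Subsingleton.elim (f 0) (f 1))) zero_ne_one
    | succ k => exact ⟨k, rfl⟩
  by_contra hfree
  -- all matrix entries lie in the maximal ideal
  have hmem : ∀ (i : Fin (n'+1)) (j : Fin (m'+1)), g (f 1 i) j ∈ maximalIdeal R := by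
    intro i j
    by_contra hu
    have hu' : IsUnit (g (f 1 i) j) := by
      by_contra hnu
      exact hu ((IsLocalRing.mem_maximalIdeal _).mpr hnu)
    obtain ⟨u, hu2⟩ := hu'
    apply hfree
    refine ⟨(u.inv : R) • ((LinearMap.proj j).comp g), LinearMap.toSpanSingleton R M (f 1 i), ?_⟩
    apply LinearMap.ext_ring
    show u.inv • (g ((1:R) • (f 1 i)) j) = 1
    rw [one_smul, ← hu2]
    exact u.inv_mul
  -- the composite map
  set V := (Fin (n'+1) → Fin (m'+1) → R) with hV
  let G : (Fin (n'+1) → M) →ₗ[R] V := g.compLeft (Fin (n'+1))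
  let h : R →ₗ[R] V := G.comp f
  have hGinj : Function.Injective G := fun a b hab => funext fun i => hg (congrFun hab i)
  have hhinj : Function.Injective h := fun a b hab => hf (hGinj hab)
  have hh1m : h 1 ∈ (maximalIdeal R • ⊤ : Submodule R V) :=
    pi_mem_smul_top _ (fun i => pi_mem_smul_top _ (fun j => mem_smul_top_self (hmem i j)))
  have hhm : h ∈ (maximalIdeal R • ⊤ : Submodule R (R →ₗ[R] V)) := by
    have h3 := smul_top_mem_of_map
      (LinearMap.ringLmapEquivSelf R R V).symm.toLinearMap hh1m
    have heq : (LinearMap.ringLmapEquivSelf R R V).symm.toLinearMap (h 1) = h := by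
      apply (LinearMap.ringLmapEquivSelf R R V).injective
      rw [LinearEquiv.coe_coe, LinearEquiv.apply_symm_apply]
      rfl
    rwa [heq] at h3
  set Z := V ⧸ LinearMap.range h with hZ
  set T := rdepth R R with hTdef
  -- range h is small
  have hrange_le : LinearMap.range h ≤ (maximalIdeal R • ⊤ : Submodule R V) := by
    rintro x ⟨w, rfl⟩
    have : h w = w • h 1 := by rw [← map_smul, smul_eq_mul, mul_one]
    rw [this]
    exact Submodule.smul_mem _ w hh1m
  haveI hVnt : Nontrivial V := inferInstance
  have hZnt : Nontrivial Z := by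
    apply Submodule.Quotient.nontrivial_iff.mpr
    refine (lt_of_le_of_lt hrange_le (lt_top_iff_ne_top.mpr ?_)).ne
    exact fun hcon => Submodule.top_ne_ideal_smul_of_le_jacobson_annihilator
      (IsLocalRing.maximalIdeal_le_jacobson _) hcon.symm
  -- Z has a regular sequence of length T
  have hZT : RSeq R Z T := by
    rcases Nat.eq_zero_or_pos T with hT0 | hTpos
    · rw [hT0]
      exact ⟨[], rfl, by simp, IsRegular.nil R Z⟩
    · haveI hXfin := hXdeep.1
      haveI hYfin := hYdeep.1
      have hXseq : RSeq R ((Fin (n'+1) → M) ⧸ LinearMap.range f) T :=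
        rseq_of_le_sSup hTpos hXdeep.2
      have hYseq : RSeq R ((Fin (m'+1) → R) ⧸ LinearMap.range g) T :=
        rseq_of_le_sSup hTpos hYdeep.2
      obtain ⟨rs, hlen, hmemrs, hXreg, hYreg⟩ := exists_common_rseq T _ _ hXseq hYseq
      have hYn : IsRegular (Fin (n'+1) → ((Fin (m'+1) → R) ⧸ LinearMap.range g)) rs :=
        isRegular_pi hYreg n'
      -- short exact sequence X → Z → Yⁿ
      let φ : (Fin (n'+1) → M) →ₗ[R] Z := (LinearMap.range h).mkQ.comp G
      have hφmk : ∀ b, (φ b = 0 ↔ G b ∈ LinearMap.range h) := by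
        intro b
        rw [show φ b = Submodule.Quotient.mk (G b) from rfl, Submodule.Quotient.mk_eq_zero]
      have hkerφ : LinearMap.ker φ = LinearMap.range f := by
        ext b
        rw [LinearMap.mem_ker, hφmk b]
        constructor
        · rintro ⟨w, hw⟩
          exact ⟨w, hGinj hw⟩
        · rintro ⟨w, rfl⟩
          exact ⟨w, rfl⟩
      let ι : ((Fin (n'+1) → M) ⧸ LinearMap.range f) →ₗ[R] Z :=
        (LinearMap.range f).liftQ φ hkerφ.symm.le
      have hιinj : Function.Injective ι := by
        rw [← LinearMap.ker_eq_bot]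
        exact Submodule.ker_liftQ_eq_bot _ _ _ hkerφ.le
      let ψ : V →ₗ[R] (Fin (n'+1) → ((Fin (m'+1) → R) ⧸ LinearMap.range g)) :=
        LinearMap.pi (fun i => (LinearMap.range g).mkQ.comp (LinearMap.proj i))
      have hkerψ : LinearMap.ker ψ = LinearMap.range G := by
        ext v
        simp only [LinearMap.mem_ker, LinearMap.mem_range]
        constructor
        · intro hv
          have hv' : ∀ i, ∃ x, g x = v i := by
            intro i
            have h5 : Submodule.Quotient.mk (v i) =
                (0 : (Fin (m'+1) → R) ⧸ LinearMap.range g) := congrFun hv i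
            rw [Submodule.Quotient.mk_eq_zero] at h5
            exact h5
          choose u hu using hv'
          exact ⟨u, funext fun i => hu i⟩
        · rintro ⟨u, rfl⟩
          ext i
          show Submodule.Quotient.mk (g (u i)) = 0
          exact (Submodule.Quotient.mk_eq_zero _).mpr ⟨u i, rfl⟩
      have hψsurj : Function.Surjective ψ := by
        intro w
        have hw : ∀ i, ∃ x : (Fin (m'+1) → R), Submodule.Quotient.mk x = w i := fun i =>
          Submodule.Quotient.mk_surjective _ (w i)
        choose x hx using hw
        exact ⟨x, funext fun i => hx i⟩
      have hhG : LinearMap.range h ≤ LinearMap.ker ψ := by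
        rw [hkerψ]
        rintro z ⟨w, rfl⟩
        exact ⟨f w, rfl⟩
      let π : Z →ₗ[R] (Fin (n'+1) → ((Fin (m'+1) → R) ⧸ LinearMap.range g)) :=
        (LinearMap.range h).liftQ ψ hhG
      have hπsurj : Function.Surjective π := by
        intro w
        obtain ⟨v, rfl⟩ := hψsurj w
        exact ⟨Submodule.Quotient.mk v, rfl⟩
      have hrange_ι : LinearMap.range ι = LinearMap.ker π := by
        have h6 : LinearMap.range φ =
            Submodule.map (LinearMap.range h).mkQ (LinearMap.range G) :=
          LinearMap.range_comp G (LinearMap.range h).mkQ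
        have h7 : LinearMap.ker π =
            Submodule.map (LinearMap.range h).mkQ (LinearMap.ker ψ) :=
          Submodule.ker_liftQ _ _ _
        have h8 : LinearMap.range ι = LinearMap.range φ := Submodule.range_liftQ _ _ _
        rw [h8, h6, h7, hkerψ]
      have hZreg : IsRegular Z rs :=
        isRegular_middle rs _ Z _ ι π hιinj hπsurj hrange_ι hXreg hYn
      exact ⟨rs, hlen, hmemrs, hZreg⟩
  -- contradiction
  have hR1 : RSeq R R (T + 1) := key_induction T R V h hhinj hhm hZT
  have hcontra : T + 1 ≤ T := by
    have hb := rseq_bddAbove (R := R) R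
    have := le_csSup hb hR1
    rwa [← rdepth_eq, ← hTdef] at this
  omega
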